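/- Let (V,q) be a finite weighted graph satisfying CD(K,∞) for some K > 0, and let (u_t) solve ∂_t u_t = Δu_t + Γu_t with u_0 ≤ 0 and Γu_0 ≤ q_min/2. Then for all t > 0, Γu_t ≤ −u_t·2K/(e^{2Kt} − 1) pointwise. -/

import Mathlib

open Finset Real

/-- Graph Laplacian on a finite weighted graph. -/
noncomputable def glap {V : Type*} [Fintype V] (q : V → V → ℝ) (f : V → ℝ) (x : V) : ℝ :=
  ∑ y, q x y * (f y - f x)

/-- Carré du champ operator Γ(f,g). -/
noncomputable def gGammaBil {V : Type*} [Fintype V] (q : V → V → ℝ) (f g : V → ℝ) (x : V) : ℝ :=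
  (1 / 2) * ∑ y, q x y * (f y - f x) * (g y - g x)

/-- Carré du champ Γf = Γ(f,f). -/
noncomputable def gGamma {V : Type*} [Fintype V] (q : V → V → ℝ) (f : V → ℝ) (x : V) : ℝ :=
  gGammaBil q f f x

/-- Iterated carré du champ Γ₂f = (ΔΓf − 2Γ(f,Δf))/2. -/
noncomputable def gGammaTwo {V : Type*} [Fintype V] (q : V → V → ℝ) (f : V → ℝ) (x : V) : ℝ :=
  (glap q (gGamma q f) x - 2 * gGammaBil q f (glap q f) x) / 2

open Set Filter Topology

section helpers
variable {V : Type*} [Fintype V]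


lemma hasDeriv_gGamma (q : V → V → ℝ) (u : ℝ → V → ℝ) (u' : V → ℝ) (t : ℝ) (S : Set ℝ)
    (hu : ∀ x, HasDerivWithinAt (fun s => u s x) (u' x) S t) (x : V) :
    HasDerivWithinAt (fun s => gGamma q (u s) x) (2 * gGammaBil q (u t) u' x) S t := by
  have H : HasDerivWithinAt (fun s => (1:ℝ)/2 * ∑ y, q x y * (u s y - u s x) * (u s y - u s x))
      ((1:ℝ)/2 * ∑ y, q x y * ((u' y - u' x) * (u t y - u t x) + (u t y - u t x) * (u' y - u' x)))
      S t := by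
    apply HasDerivWithinAt.const_mul
    apply HasDerivWithinAt.fun_sum
    intro y _
    have hd : HasDerivWithinAt (fun s => u s y - u s x) (u' y - u' x) S t := (hu y).sub (hu x)
    have := (hd.mul hd).const_mul (q x y)
    simpa [mul_assoc, mul_add] using this
  have heq : (2:ℝ) * gGammaBil q (u t) u' x
      = (1:ℝ)/2 * ∑ y, q x y * ((u' y - u' x) * (u t y - u t x) + (u t y - u t x) * (u' y - u' x)) := by
    rw [gGammaBil, Finset.mul_sum, Finset.mul_sum, Finset.mul_sum]
    exact Finset.sum_congr rfl fun y _ => by ring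
  rw [heq]
  simpa only [gGamma, gGammaBil] using H

lemma gGamma_nonneg (q : V → V → ℝ) (hq : ∀ x y, 0 ≤ q x y) (f : V → ℝ) (x : V) :
    0 ≤ gGamma q f x := by
  rw [gGamma, gGammaBil]
  apply mul_nonneg (by norm_num)
  apply Finset.sum_nonneg
  intro y _
  have := hq x y
  nlinarith [sq_nonneg (f y - f x)]

lemma term_le_gGamma (q : V → V → ℝ) (hq : ∀ x y, 0 ≤ q x y) (f : V → ℝ) (x y : V) :
    q x y * (f y - f x) * (f y - f x) ≤ 2 * gGamma q f x := by
  rw [gGamma, gGammaBil]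
  rw [show (2:ℝ) * ((1/2) * ∑ z, q x z * (f z - f x) * (f z - f x))
      = ∑ z, q x z * (f z - f x) * (f z - f x) by ring]
  apply Finset.single_le_sum (f := fun z => q x z * (f z - f x) * (f z - f x))
    (fun z _ => by rw [mul_assoc]; exact mul_nonneg (hq x z) (mul_self_nonneg _))
    (Finset.mem_univ y)

lemma sq_diff_le_one (q : V → V → ℝ) (hq : ∀ x y, 0 ≤ q x y) (qmin : ℝ)
    (hqmin : ∀ x y, 0 < q x y → qmin ≤ q x y) (f : V → ℝ) (x y : V)
    (hG : gGamma q f x ≤ qmin / 2) (hpos : 0 < q x y) :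
    (f y - f x) ^ 2 ≤ 1 := by
  have h1 := term_le_gGamma q hq f x y
  have h2 := hqmin x y hpos
  nlinarith [sq_nonneg (f y - f x)]

lemma alg_key (q : V → V → ℝ) (v w : V → ℝ) (x : V) (hq : ∀ y, 0 ≤ q x y)
    (hw : ∀ y, w y ≤ w x) (hv : ∀ y, 0 < q x y → (v y - v x) ^ 2 ≤ 1) :
    glap q w x + 2 * gGammaBil q v w x ≤ 0 := by
  have heq : glap q w x + 2 * gGammaBil q v w x
      = ∑ y, q x y * (w y - w x) * (1 + (v y - v x)) := by
    rw [glap, gGammaBil,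
      show (2:ℝ) * ((1/2) * ∑ y, q x y * (v y - v x) * (w y - w x))
        = ∑ y, q x y * (v y - v x) * (w y - w x) by ring,
      ← Finset.sum_add_distrib]
    exact Finset.sum_congr rfl fun y _ => by ring
  rw [heq]
  apply Finset.sum_nonpos
  intro y _
  rcases (hq y).lt_or_eq with hpos | hzero
  · have h1 : (1 : ℝ) + (v y - v x) ≥ 0 := by nlinarith [hv y hpos, sq_nonneg (1 + (v y - v x))]
    have h2 : w y - w x ≤ 0 := by linarith [hw y]
    have h3 := mul_nonpos_of_nonneg_of_nonpos (mul_nonneg (hq y) h1) h2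
    nlinarith [h3]
  · simp [← hzero]

lemma glap_comb (q : V → V → ℝ) (c : ℝ) (f g : V → ℝ) (x : V) :
    glap q (fun y => c * f y + g y) x = c * glap q f x + glap q g x := by
  simp only [glap, Finset.mul_sum, ← Finset.sum_add_distrib]
  exact Finset.sum_congr rfl fun y _ => by ring

lemma gGammaBil_comb (q : V → V → ℝ) (v : V → ℝ) (c : ℝ) (f g : V → ℝ) (x : V) :
    gGammaBil q v (fun y => c * f y + g y) x = c * gGammaBil q v f x + gGammaBil q v g x := by
  simp only [gGammaBil, Finset.mul_sum, ← Finset.sum_add_distrib]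
  exact Finset.sum_congr rfl fun y _ => by ring

end helpers

section mp

lemma contOn_finset_sup' {ι : Type*} (s : Finset ι) (hs : s.Nonempty) (g : ι → ℝ → ℝ)
    (S : Set ℝ) (h : ∀ i ∈ s, ContinuousOn (g i) S) :
    ContinuousOn (fun t => s.sup' hs (fun i => g i t)) S := by
  induction hs using Finset.Nonempty.cons_induction with
  | singleton i =>
    simp only [Finset.sup'_singleton]
    exact h i (by simp)
  | cons i s hi hs ih =>
    simp only [Finset.sup'_cons hs]
    exact (h i (by simp)).sup' (ih fun j hj => h j (Finset.mem_cons_of_mem hj))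

lemma finset_max_principle {ι : Type*} [Fintype ι] [Nonempty ι] {a b : ℝ}
    (g g' : ι → ℝ → ℝ) (B B' : ℝ → ℝ)
    (hg : ∀ i, ∀ t ∈ Set.Ico a b, HasDerivWithinAt (g i) (g' i t) (Set.Ici t) t)
    (hgc : ∀ i, ContinuousOn (g i) (Set.Icc a b))
    (hB : ∀ t, HasDerivAt B (B' t) t)
    (ha : ∀ i, g i a ≤ B a)
    (bound : ∀ t ∈ Set.Ico a b, ∀ i, (∀ j, g j t ≤ g i t) → g i t = B t → g' i t < B' t) :
    ∀ t ∈ Set.Icc a b, ∀ i, g i t ≤ B t := by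
  classical
  set f : ℝ → ℝ := fun t => Finset.univ.sup' Finset.univ_nonempty (fun i => g i t) with hf
  have hle : ∀ t i, g i t ≤ f t := fun t i =>
    Finset.le_sup' (fun j => g j t) (Finset.mem_univ i)
  set A : ℝ → Finset ι := fun t => Finset.univ.filter (fun i => g i t = f t) with hAdef
  have hA : ∀ t, (A t).Nonempty := by
    intro t
    obtain ⟨i, -, hi⟩ := Finset.exists_mem_eq_sup' Finset.univ_nonempty (fun i => g i t)
    exact ⟨i, by simp [hAdef, hi.symm]; rfl⟩
  set f' : ℝ → ℝ := fun t => (A t).sup' (hA t) (fun i => g' i t) with hf'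
  have key : ∀ ⦃t⦄, t ∈ Set.Icc a b → f t ≤ B t := by
    apply image_le_of_liminf_slope_right_lt_deriv_boundary
      (f' := f') (contOn_finset_sup' _ _ _ _ (fun i _ => hgc i)) ?_ ?_ hB ?_
    · -- hf'
      intro t ht r hr
      apply Filter.Eventually.frequently
      have hrA : ∀ i ∈ A t, g' i t < r := fun i hi =>
        lt_of_le_of_lt (Finset.le_sup' (fun i => g' i t) hi) hr
      have key : ∀ i, ∀ᶠ z in 𝓝[>] t, g i z < f t + r * (z - t) := by
        intro i
        by_cases hi : g i t = f t
        · have hd := ((hg i t ht).Ioi_of_Ici)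
          have hlt : g' i t < r := hrA i (by simp [hAdef, hi])
          have h1 : ∀ᶠ z in 𝓝[>] t, slope (g i) t z < r :=
            (hasDerivWithinAt_iff_tendsto_slope' (lt_irrefl t)).1 hd (Iio_mem_nhds hlt)
          filter_upwards [h1, self_mem_nhdsWithin] with z hz hz'
          have hzt : (0:ℝ) < z - t := sub_pos.2 hz'
          rw [slope_def_field, div_lt_iff₀ hzt] at hz
          nlinarith [hz]
        · have hlt : g i t < f t := lt_of_le_of_ne (hle t i) hi
          have hc : Filter.Tendsto (g i) (𝓝[>] t) (𝓝 (g i t)) :=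
            ((hg i t ht).continuousWithinAt.tendsto).mono_left
              (nhdsWithin_mono t Set.Ioi_subset_Ici_self)
          have hc2 : Filter.Tendsto (fun z => f t + r * (z - t)) (𝓝[>] t) (𝓝 (f t)) := by
            have : Filter.Tendsto (fun z => f t + r * (z - t)) (𝓝 t) (𝓝 (f t + r * (t - t))) :=
              (continuous_const.add (continuous_const.mul (continuous_id.sub continuous_const))).tendsto t
            simpa using this.mono_left nhdsWithin_le_nhds
          exact hc.eventually_lt hc2 hlt
      have hall : ∀ᶠ z in 𝓝[>] t, ∀ i, g i z < f t + r * (z - t) := eventually_all.2 key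
      filter_upwards [hall, self_mem_nhdsWithin] with z hz hz'
      have hzt : (0:ℝ) < z - t := sub_pos.2 hz'
      have hfz : f z < f t + r * (z - t) :=
        (Finset.sup'_lt_iff _).2 fun i _ => hz i
      rw [slope_def_field, div_lt_iff₀ hzt]
      linarith
    · exact Finset.sup'_le _ _ fun i _ => ha i
    · -- bound
      intro t ht htouch
      obtain ⟨i, hiA, hieq⟩ := Finset.exists_mem_eq_sup' (hA t) (fun i => g' i t)
      have higt : g i t = f t := by simpa [hAdef] using hiA
      show f' t < B' t
      have hfeq : f' t = g' i t := hieq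
      rw [hfeq]
      exact bound t ht i (fun j => higt ▸ hle t j) (higt.trans htouch)
  exact fun t ht i => (hle t i).trans (key ht)

end mp

section helpers
variable {V : Type*} [Fintype V]
end helpers

/-- Hamilton gradient estimate under CD(K,∞), K > 0: Γu_t ≤ −u_t · 2K/(e^{2Kt} − 1). -/
theorem hamilton_estimate_CD_K_infty {V : Type*} [Fintype V] (q : V → V → ℝ)
    (hq : ∀ x y, 0 ≤ q x y) (hdiag : ∀ x, q x x = 0) (qmin K : ℝ) (hK : 0 < K)
    (hqmin_pos : 0 < qmin) (hqmin : ∀ x y, 0 < q x y → qmin ≤ q x y)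
    (hCD : ∀ f : V → ℝ, ∀ x, K * gGamma q f x ≤ gGammaTwo q f x)
    (u : ℝ → V → ℝ)
    (hu : ∀ t ∈ Set.Ici (0 : ℝ), ∀ x, HasDerivWithinAt (fun s => u s x)
      (glap q (u t) x + gGamma q (u t) x) (Set.Ici 0) t)
    (hneg : ∀ x, u 0 x ≤ 0)
    (h0 : ∀ x, gGamma q (u 0) x ≤ qmin / 2) :
    ∀ t : ℝ, 0 < t → ∀ x,
      gGamma q (u t) x ≤ -(u t x) * (2 * K) / (Real.exp (2 * K * t) - 1) := by
  intro t ht x0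
  have hne : Nonempty V := ⟨x0⟩
  -- derivative of gGamma along the flow
  have hDG : ∀ s ∈ Set.Ici (0:ℝ), ∀ x : V, HasDerivWithinAt (fun r => gGamma q (u r) x)
      (2 * gGammaBil q (u s) (fun z => glap q (u s) z + gGamma q (u s) z) x) (Set.Ici 0) s :=
    fun s hs x => hasDeriv_gGamma q u _ s _ (fun z => hu s hs z) x
  -- expansion of the Bochner-type term
  have hExp : ∀ s : ℝ, ∀ x : V,
      2 * gGammaBil q (u s) (fun z => glap q (u s) z + gGamma q (u s) z) x
        = (glap q (gGamma q (u s)) x - 2 * gGammaTwo q (u s) x)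
          + 2 * gGammaBil q (u s) (gGamma q (u s)) x := by
    intro s x
    have h1 : (fun z => glap q (u s) z + gGamma q (u s) z)
        = (fun z => (1:ℝ) * glap q (u s) z + gGamma q (u s) z) := by
      funext z; ring
    rw [h1, gGammaBil_comb, gGammaTwo]
    ring
  -- Step 1: propagation of the gradient bound
  have hA : ∀ s : ℝ, 0 ≤ s → ∀ x : V, gGamma q (u s) x ≤ qmin / 2 := by
    intro s hs x
    have boundA : ∀ r ∈ Set.Ico (0:ℝ) (s+1), ∀ y : V,
        (∀ j : V, gGamma q (u r) j ≤ gGamma q (u r) y) → gGamma q (u r) y = qmin/2 →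
        2 * gGammaBil q (u r) (fun z => glap q (u r) z + gGamma q (u r) z) y < 0 := by
      intro r hr y hmax htouch
      have halg := alg_key q (u r) (gGamma q (u r)) y (fun z => hq y z) hmax
        (fun z hz => sq_diff_le_one q hq qmin hqmin (u r) y z (le_of_eq htouch) hz)
      have hCD' := hCD (u r) y
      rw [htouch] at hCD'
      rw [hExp r y]
      nlinarith [halg, hCD', hK, hqmin_pos]
    exact finset_max_principle (a := 0) (b := s + 1)
      (fun x r => gGamma q (u r) x)
      (fun x r => 2 * gGammaBil q (u r) (fun z => glap q (u r) z + gGamma q (u r) z) x)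
      (fun _ => qmin / 2) (fun _ => 0)
      (fun i r hr => (hDG r hr.1 i).mono (Set.Ici_subset_Ici.2 hr.1))
      (fun i r hr => ((hDG r (Set.Icc_subset_Ici_self hr) i).continuousWithinAt).mono
        (fun z hz => Set.Icc_subset_Ici_self hz))
      (fun r => hasDerivAt_const r (qmin / 2))
      h0 boundA s ⟨hs, by linarith⟩ x
  -- the barrier function φ
  set φ : ℝ → ℝ := fun s => (Real.exp (2 * K * s) - 1) / (2 * K) with hφdef
  have hφderiv : ∀ s : ℝ, HasDerivAt φ (Real.exp (2 * K * s)) s := by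
    intro s
    have h1 : HasDerivAt (fun r : ℝ => 2 * K * r) (2 * K) s := by
      simpa using (hasDerivAt_id s).const_mul (2 * K)
    have h2 : HasDerivAt (fun r : ℝ => Real.exp (2 * K * r)) (Real.exp (2 * K * s) * (2 * K)) s :=
      h1.exp
    have h3 := (h2.sub_const 1).div_const (2 * K)
    rw [mul_div_assoc, div_self (by positivity), mul_one] at h3
    exact h3
  have hφ0 : φ 0 = 0 := by simp [hφdef]
  have hφnonneg : ∀ s : ℝ, 0 ≤ s → 0 ≤ φ s := by
    intro s hs
    have h1 : (1:ℝ) ≤ Real.exp (2 * K * s) := by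
      rw [show (1:ℝ) = Real.exp 0 by simp]
      exact Real.exp_le_exp.2 (by positivity)
    have h2K : (0:ℝ) < 2 * K := by positivity
    simp only [hφdef]
    exact div_nonneg (by linarith) h2K.le
  have hφeq : ∀ s : ℝ, Real.exp (2 * K * s) = 2 * K * φ s + 1 := by
    intro s
    simp only [hφdef]
    field_simp
    ring
  -- Step 2: the maximum principle for G = φ Γu + u, with barrier ε e^s
  have main : ∀ ε : ℝ, 0 < ε → ∀ s ∈ Set.Icc (0:ℝ) (t + 1), ∀ x : V,
      φ s * gGamma q (u s) x + u s x ≤ ε * Real.exp s := by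
    intro ε hε s hs x
    have boundB : ∀ r ∈ Set.Ico (0:ℝ) (t+1), ∀ y : V,
        (∀ j : V, φ r * gGamma q (u r) j + u r j ≤ φ r * gGamma q (u r) y + u r y) →
        φ r * gGamma q (u r) y + u r y = ε * Real.exp r →
        Real.exp (2 * K * r) * gGamma q (u r) y
          + φ r * (2 * gGammaBil q (u r) (fun z => glap q (u r) z + gGamma q (u r) z) y)
          + (glap q (u r) y + gGamma q (u r) y) < ε * Real.exp r := by
      intro r hr y hmax htouch
      have hr0 : (0:ℝ) ≤ r := hr.1
      have halg : glap q (fun z => φ r * gGamma q (u r) z + u r z) y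
          + 2 * gGammaBil q (u r) (fun z => φ r * gGamma q (u r) z + u r z) y ≤ 0 :=
        alg_key q (u r) (fun z => φ r * gGamma q (u r) z + u r z) y (fun z => hq y z) hmax
          (fun z hz => sq_diff_le_one q hq qmin hqmin (u r) y z (hA r hr0 y) hz)
      have hglapw : glap q (fun z => φ r * gGamma q (u r) z + u r z) y
          = φ r * glap q (gGamma q (u r)) y + glap q (u r) y :=
        glap_comb q (φ r) (gGamma q (u r)) (u r) y
      have hbilw : gGammaBil q (u r) (fun z => φ r * gGamma q (u r) z + u r z) y
          = φ r * gGammaBil q (u r) (gGamma q (u r)) y + gGammaBil q (u r) (u r) y :=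
        gGammaBil_comb q (u r) (φ r) (gGamma q (u r)) (u r) y
      have hbilself : gGammaBil q (u r) (u r) y = gGamma q (u r) y := rfl
      have hφn := hφnonneg r hr0
      have hmul : φ r * (K * gGamma q (u r) y) ≤ φ r * gGammaTwo q (u r) y :=
        mul_le_mul_of_nonneg_left (hCD (u r) y) hφn
      have hφe := hφeq r
      have hBpos : 0 < ε * Real.exp r := by positivity
      have hmulE : φ r * (2 * gGammaBil q (u r) (fun z => glap q (u r) z + gGamma q (u r) z) y)
          = φ r * glap q (gGamma q (u r)) y - 2 * (φ r * gGammaTwo q (u r) y)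
            + φ r * (2 * gGammaBil q (u r) (gGamma q (u r)) y) := by
        rw [hExp r y]; ring
      rw [hglapw, hbilw, hbilself] at halg
      rw [hmulE, hφe]
      nlinarith [hmul, halg]
    exact finset_max_principle (a := 0) (b := t + 1)
      (fun x r => φ r * gGamma q (u r) x + u r x)
      (fun x r => Real.exp (2 * K * r) * gGamma q (u r) x
        + φ r * (2 * gGammaBil q (u r) (fun z => glap q (u r) z + gGamma q (u r) z) x)
        + (glap q (u r) x + gGamma q (u r) x))
      (fun r => ε * Real.exp r) (fun r => ε * Real.exp r)
      (fun i r hr => ((((hφderiv r).hasDerivWithinAt.mul (hDG r hr.1 i)).add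
        (hu r hr.1 i)).mono (Set.Ici_subset_Ici.2 hr.1)))
      (fun i r hr => ((((hφderiv r).continuousAt.continuousWithinAt.mul
        ((hDG r (Set.Icc_subset_Ici_self hr) i).continuousWithinAt)).add
        ((hu r (Set.Icc_subset_Ici_self hr) i).continuousWithinAt)).mono
        (fun z hz => Set.Icc_subset_Ici_self hz)
        : ContinuousWithinAt _ (Set.Icc (0:ℝ) (t+1)) r))
      (fun r => (Real.hasDerivAt_exp r).const_mul ε)
      (fun i => by
        show φ 0 * gGamma q (u 0) i + u 0 i ≤ ε * Real.exp 0
        rw [hφ0]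
        have := hneg i
        simp only [zero_mul, zero_add, Real.exp_zero, mul_one]
        linarith)
      boundB s hs x
  -- pass to the limit ε → 0
  have hX : φ t * gGamma q (u t) x0 + u t x0 ≤ 0 := by
    apply le_of_forall_pos_le_add
    intro δ hδ
    have hexp : 0 < Real.exp t := Real.exp_pos t
    have := main (δ / Real.exp t) (by positivity) t ⟨le_of_lt ht, by linarith⟩ x0
    rw [div_mul_cancel₀] at this
    · linarith
    · exact ne_of_gt hexp
  -- conclude
  have hE1 : 1 < Real.exp (2 * K * t) := by
    rw [show (1:ℝ) = Real.exp 0 by simp]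
    exact Real.exp_lt_exp.2 (by positivity)
  rw [le_div_iff₀ (by linarith : (0:ℝ) < Real.exp (2 * K * t) - 1)]
  have h2K : (0:ℝ) < 2 * K := by positivity
  have hmulφ : φ t * (2 * K) = Real.exp (2 * K * t) - 1 := by
    simp only [hφdef]; field_simp
  have h1 := mul_le_mul_of_nonneg_left hX h2K.le
  have h3 : gGamma q (u t) x0 * (Real.exp (2 * K * t) - 1)
      = 2 * K * (φ t * gGamma q (u t) x0) := by rw [← hmulφ]; ring
  nlinarith [h1, h3]
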